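/- With the above construction, assume additionally that M is even and set N = 2M. Then the derivative of ṽ at the right endpoint satisfies the closed form ṽ'(b) = v_0·( -(π/(bM)) Σ_{i=1}^{M-1} i·cot(iπ/N) + (π/b) Σ_{j=1}^{M-1} (-1)^{j+1} tan(jπ/N) - 1/b ) + v_M·( 1/b + (π/(bM)) Σ_{i=1}^{M-1} i·cot(iπ/N) ) - (π/b) Σ_{i=1}^{M-1} (-1)^{i+1} v_i·tan(iπ/N). -/

import Mathlib

open Real Finset

lemma L1 (θ : ℝ) (n : ℕ) :
    2 * Real.sin (θ/2) * ∑ j ∈ Finset.range n, Real.cos (((j:ℝ) + 1/2) * θ)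
      = Real.sin (n * θ) := by
  induction n with
  | zero => simp
  | succ n ih =>
    rw [Finset.sum_range_succ, mul_add, ih]
    have h := Real.sin_sub_sin (((n:ℝ)+1) * θ) ((n:ℝ) * θ)
    have h1 : (((n:ℝ)+1) * θ - (n:ℝ) * θ)/2 = θ/2 := by ring
    have h2 : (((n:ℝ)+1) * θ + (n:ℝ) * θ)/2 = ((n:ℝ) + 1/2) * θ := by ring
    rw [h1, h2] at h
    push_cast
    linarith

lemma L2 (θ : ℝ) (n : ℕ) :
    2 * Real.sin (θ/2) * ∑ j ∈ Finset.range (n+1), (j:ℝ) * Real.sin ((j:ℝ) * θ)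
      = (∑ j ∈ Finset.range n, Real.cos (((j:ℝ) + 1/2) * θ))
        - (n:ℝ) * Real.cos (((n:ℝ) + 1/2) * θ) := by
  induction n with
  | zero => simp
  | succ n ih =>
    rw [Finset.sum_range_succ (n := n+1), mul_add, ih, Finset.sum_range_succ]
    have h := Real.cos_sub_cos (((n:ℝ) + 1/2) * θ) (((n:ℝ) + 3/2) * θ)
    have h1 : ((((n:ℝ)+1/2) * θ + ((n:ℝ)+3/2) * θ))/2 = ((n:ℝ)+1) * θ := by ring
    have h2 : ((((n:ℝ)+1/2) * θ - ((n:ℝ)+3/2) * θ))/2 = -(θ/2) := by ring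
    rw [h1, h2, Real.sin_neg] at h
    push_cast
    have h3 : ((n:ℝ) + 1 + 1/2) = (n:ℝ) + 3/2 := by ring
    rw [h3]
    linear_combination (-(n:ℝ)-1) * h

lemma Tlem (M m : ℕ) (hm1 : 1 ≤ m) (hmM : m < M) :
    ∑ j ∈ Finset.Ico 1 M, (j:ℝ) * Real.sin ((j:ℝ) * ((m:ℝ) * Real.pi / M))
      = (-1)^(m+1) * ((M:ℝ)/2) * Real.cot ((m:ℝ) * Real.pi / (2*(M:ℝ))) := by
  obtain ⟨n, rfl⟩ : ∃ n, M = n + 1 := ⟨M - 1, by omega⟩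
  have hM0 : ((n:ℝ)+1) ≠ 0 := by positivity
  set θ : ℝ := (m:ℝ) * Real.pi / (↑(n+1)) with hθ
  have hhalf : θ/2 = (m:ℝ)*Real.pi/(2*(↑(n+1):ℝ)) := by rw [hθ]; ring
  have hs : 0 < Real.sin (θ/2) := by
    rw [hhalf]
    apply Real.sin_pos_of_pos_of_lt_pi
    · have : (0:ℝ) < (m:ℝ) := by exact_mod_cast hm1
      positivity
    · rw [div_lt_iff₀ (by positivity)]
      have h1 : (m:ℝ) < 2*(↑(n+1):ℝ) := by exact_mod_cast (by omega : m < 2*(n+1))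
      nlinarith [Real.pi_pos]
  have hsum0 : ∑ j ∈ Finset.range (n+1), (j:ℝ) * Real.sin ((j:ℝ)*θ)
      = ∑ j ∈ Finset.Ico 1 (n+1), (j:ℝ)*Real.sin ((j:ℝ)*θ) := by
    rw [Finset.range_eq_Ico, Finset.sum_eq_sum_Ico_succ_bot (by omega)]
    simp
  have hL2 := L2 θ n
  have hL1 := L1 θ n
  have hsinn : Real.sin ((n:ℝ)*θ) = (-1)^(m+1) * Real.sin θ := by
    have h2 : (n:ℝ)*θ = (m:ℝ)*Real.pi - θ := by
      rw [hθ]; push_cast; field_simp; ring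
    rw [h2, Real.sin_nat_mul_pi_sub]; ring
  have hcosn : Real.cos (((n:ℝ)+1/2)*θ) = (-1)^m * Real.cos (θ/2) := by
    have h2 : ((n:ℝ)+1/2)*θ = (m:ℝ)*Real.pi - θ/2 := by
      rw [hθ]; push_cast; field_simp; ring
    rw [h2, Real.cos_nat_mul_pi_sub]
  have hsinθ : Real.sin θ = 2 * Real.sin (θ/2) * Real.cos (θ/2) := by
    rw [← Real.sin_two_mul]; congr 1; ring
  rw [hsum0] at hL2
  rw [hsinn, hsinθ] at hL1
  rw [hcosn] at hL2
  rw [Real.cot_eq_cos_div_sin, ← hhalf]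
  rw [mul_div_assoc', eq_div_iff hs.ne', ← sub_eq_zero]
  have key : 2*Real.sin (θ/2) *
      ((∑ j ∈ Finset.Ico 1 (n+1), (j:ℝ)*Real.sin ((j:ℝ)*θ)) * Real.sin (θ/2)
        - (-1)^(m+1) * ((↑(n+1):ℝ)/2) * Real.cos (θ/2)) = 0 := by
    push_cast at hL2 hL1 ⊢
    linear_combination Real.sin (θ/2) * hL2 + (1/2) * hL1
  have h2s : (2:ℝ)*Real.sin (θ/2) ≠ 0 := by positivity
  exact (mul_eq_zero.mp key).resolve_left h2s

lemma cot_to_tan (x : ℝ) : Real.cot (Real.pi/2 - x) = Real.tan x := by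
  rw [Real.cot_eq_cos_div_sin, Real.cos_pi_div_two_sub, Real.sin_pi_div_two_sub,
    Real.tan_eq_sin_div_cos]

lemma Slem (M k : ℕ) (hMeven : Even M) (hk1 : 1 ≤ k) (hkM : k < M) :
    ∑ j ∈ Finset.Ico 1 M, (-1:ℝ)^j * ((j:ℝ) * Real.sin ((j:ℝ) * ((k:ℝ) * Real.pi / M)))
      = (-1)^k * ((M:ℝ)/2) * Real.tan ((k:ℝ) * Real.pi / (2*(M:ℝ))) := by
  have hMpos : (0:ℝ) < (M:ℝ) := by exact_mod_cast (by omega : 0 < M)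
  set m := M - k with hm
  have hm1 : 1 ≤ m := by omega
  have hmM : m < M := by omega
  have hcastm : (m:ℝ) = (M:ℝ) - (k:ℝ) := by
    rw [hm]; push_cast [Nat.cast_sub hkM.le]; ring
  have hterm : ∀ j ∈ Finset.Ico 1 M,
      (-1:ℝ)^j * ((j:ℝ) * Real.sin ((j:ℝ)*((k:ℝ)*Real.pi/M)))
        = -((j:ℝ) * Real.sin ((j:ℝ)*((m:ℝ)*Real.pi/M))) := by
    intro j _
    have h2 : (j:ℝ)*((m:ℝ)*Real.pi/M) = (j:ℝ)*Real.pi - (j:ℝ)*((k:ℝ)*Real.pi/M) := by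
      rw [hcastm]; field_simp
    rw [h2, Real.sin_nat_mul_pi_sub]; ring
  rw [Finset.sum_congr rfl hterm, Finset.sum_neg_distrib, Tlem M m hm1 hmM]
  have harg : (m:ℝ) * Real.pi / (2*(M:ℝ)) = Real.pi/2 - (k:ℝ)*Real.pi/(2*(M:ℝ)) := by
    rw [hcastm]; field_simp
  rw [harg, cot_to_tan]
  have hsign : ((-1:ℝ))^m * (-1:ℝ)^k = 1 := by
    rw [← pow_add, hm]
    have : M - k + k = M := by omega
    rw [this, hMeven.neg_one_pow]
  have hk2 : ((-1:ℝ))^k * (-1:ℝ)^k = 1 := by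
    rw [← pow_add, Even.neg_one_pow ⟨k, by ring⟩]
  have heq : ((-1:ℝ))^m = (-1:ℝ)^k := by
    linear_combination ((-1:ℝ)^k) * hsign - ((-1:ℝ)^m) * hk2
  rw [pow_succ, heq]; ring

lemma Ilem (M : ℕ) (hM : 2 ≤ M) (hMeven : Even M) :
    ∑ k ∈ Finset.Ico 1 M, (-1:ℝ)^(k+1) * (k:ℝ) * Real.tan ((k:ℝ)*Real.pi/(2*(M:ℝ)))
      = ∑ i ∈ Finset.Ico 1 M, (i:ℝ) * Real.cot ((i:ℝ)*Real.pi/(2*(M:ℝ))) := by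
  have hM0 : ((M:ℝ)) ≠ 0 := by positivity
  have hL : ∀ k ∈ Finset.Ico 1 M, (-1:ℝ)^(k+1) * (k:ℝ) * Real.tan ((k:ℝ)*Real.pi/(2*(M:ℝ)))
      = ∑ j ∈ Finset.Ico 1 M, (2/(M:ℝ)) * (k:ℝ) * ((-1:ℝ)^(j+1) * ((j:ℝ) * Real.sin ((j:ℝ)*((k:ℝ)*Real.pi/M)))) := by
    intro k hk
    rw [Finset.mem_Ico] at hk
    have hS := Slem M k hMeven hk.1 hk.2
    have htan : Real.tan ((k:ℝ)*Real.pi/(2*(M:ℝ)))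
        = (-1:ℝ)^k * (2/(M:ℝ)) * ∑ j ∈ Finset.Ico 1 M, (-1:ℝ)^j * ((j:ℝ) * Real.sin ((j:ℝ)*((k:ℝ)*Real.pi/M))) := by
      rw [hS]
      have hk2 : ((-1:ℝ))^k * (-1:ℝ)^k = 1 := by
        rw [← pow_add, Even.neg_one_pow ⟨k, by ring⟩]
      field_simp
      linear_combination (-Real.tan ((k:ℝ)*Real.pi/(2*(M:ℝ)))) * hk2
    rw [htan, Finset.mul_sum, Finset.mul_sum]
    apply Finset.sum_congr rfl
    intro j _
    have hk2 : ((-1:ℝ))^k * (-1:ℝ)^k = 1 := by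
      rw [← pow_add, Even.neg_one_pow ⟨k, by ring⟩]
    rw [pow_succ, pow_succ]
    linear_combination (-(2/(M:ℝ))*(k:ℝ)*((j:ℝ) * Real.sin ((j:ℝ)*((k:ℝ)*Real.pi/M)))*(-1:ℝ)^j) * hk2
  have hR : ∀ i ∈ Finset.Ico 1 M, (i:ℝ) * Real.cot ((i:ℝ)*Real.pi/(2*(M:ℝ)))
      = ∑ j ∈ Finset.Ico 1 M, (2/(M:ℝ)) * (j:ℝ) * ((-1:ℝ)^(i+1) * ((i:ℝ) * Real.sin ((i:ℝ)*((j:ℝ)*Real.pi/M)))) := by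
    intro i hi
    rw [Finset.mem_Ico] at hi
    have hT := Tlem M i hi.1 hi.2
    have hcot : Real.cot ((i:ℝ)*Real.pi/(2*(M:ℝ)))
        = (-1:ℝ)^(i+1) * (2/(M:ℝ)) * ∑ j ∈ Finset.Ico 1 M, (j:ℝ) * Real.sin ((j:ℝ)*((i:ℝ)*Real.pi/M)) := by
      rw [hT]
      have hi2 : ((-1:ℝ))^(i+1) * (-1:ℝ)^(i+1) = 1 := by
        rw [← pow_add, Even.neg_one_pow ⟨i+1, by ring⟩]
      field_simp
      linear_combination (-Real.cot ((i:ℝ)*Real.pi/(2*(M:ℝ)))) * hi2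
    rw [hcot, Finset.mul_sum, Finset.mul_sum]
    apply Finset.sum_congr rfl
    intro j _
    have harg : (i:ℝ)*((j:ℝ)*Real.pi/M) = (j:ℝ)*((i:ℝ)*Real.pi/M) := by ring
    rw [harg]; ring
  rw [Finset.sum_congr rfl hL, Finset.sum_congr rfl hR, Finset.sum_comm]

/-- Closed form for `ṽ'(b)` (with `M` even, `N = 2M`) in terms of
the grid values `v₀, …, v_M`, cotangents and tangents. -/
theorem stmt_10 (M : ℕ) (hM : 2 ≤ M) (hMeven : Even M) (b : ℝ) (hb : 0 < b) (v : ℕ → ℝ) :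
    let a₁ : ℝ := v 0
    let a₀ : ℝ := (v M - v 0) / b
    let B : ℕ → ℝ := fun j => (j : ℝ) ^ 2 * ∑ k ∈ Finset.Ico 1 M,
      Real.sin (Real.pi * (j : ℝ) * (k : ℝ) / (M : ℝ)) *
        ((2 * a₁ * Real.pi ^ 2) / ((M : ℝ) * b ^ 2)
          + (2 * a₀ * Real.pi ^ 2 * (k : ℝ)) / (b * (M : ℝ) ^ 2)
          - (2 * Real.pi ^ 2 / ((M : ℝ) * b ^ 2)) * v k)
    let vt : ℝ → ℝ := fun x =>
      a₁ + a₀ * x - (b / Real.pi) ^ 2 *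
        ∑ j ∈ Finset.Ico 1 M, (B j / (j : ℝ) ^ 2) * Real.sin ((j : ℝ) * Real.pi * x / b)
    deriv vt b =
      v 0 * (-(Real.pi / (b * (M : ℝ))) * ∑ i ∈ Finset.Ico 1 M,
              (i : ℝ) * Real.cot ((i : ℝ) * Real.pi / (2 * (M : ℝ)))
            + (Real.pi / b) * ∑ j ∈ Finset.Ico 1 M,
              (-1 : ℝ) ^ (j + 1) * Real.tan ((j : ℝ) * Real.pi / (2 * (M : ℝ)))
            - 1 / b)
      + v M * (1 / b + (Real.pi / (b * (M : ℝ))) * ∑ i ∈ Finset.Ico 1 M,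
              (i : ℝ) * Real.cot ((i : ℝ) * Real.pi / (2 * (M : ℝ))))
      - (Real.pi / b) * ∑ i ∈ Finset.Ico 1 M,
          (-1 : ℝ) ^ (i + 1) * v i * Real.tan ((i : ℝ) * Real.pi / (2 * (M : ℝ))) := by
  intro a₁ a₀ B vt
  have hbne : b ≠ 0 := hb.ne'
  have hMne : ((M:ℝ)) ≠ 0 := by positivity
  have hπ : Real.pi ≠ 0 := Real.pi_ne_zero
  -- abbreviation for the coefficient
  set c : ℕ → ℝ := fun k => (2 * a₁ * Real.pi ^ 2) / ((M : ℝ) * b ^ 2)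
      + (2 * a₀ * Real.pi ^ 2 * (k : ℝ)) / (b * (M : ℝ) ^ 2)
      - (2 * Real.pi ^ 2 / ((M : ℝ) * b ^ 2)) * v k with hc
  -- derivative of each sine term
  have hder : ∀ j : ℕ, HasDerivAt (fun x : ℝ => Real.sin ((j:ℝ)*Real.pi*x/b))
      (Real.cos ((j:ℝ)*Real.pi) * ((j:ℝ)*Real.pi/b)) b := by
    intro j
    have hlin : HasDerivAt (fun x : ℝ => (j:ℝ)*Real.pi*x/b) ((j:ℝ)*Real.pi/b) b := by
      simpa using ((hasDerivAt_id b).const_mul ((j:ℝ)*Real.pi)).div_const b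
    have h2 := hlin.sin
    have hbb : (j:ℝ)*Real.pi*b/b = (j:ℝ)*Real.pi := by field_simp
    rw [hbb] at h2
    exact h2
  have hsum : HasDerivAt (fun x : ℝ => ∑ j ∈ Finset.Ico 1 M,
        (B j / (j:ℝ)^2) * Real.sin ((j:ℝ)*Real.pi*x/b))
      (∑ j ∈ Finset.Ico 1 M, (B j / (j:ℝ)^2) * (Real.cos ((j:ℝ)*Real.pi) * ((j:ℝ)*Real.pi/b))) b :=
    HasDerivAt.fun_sum (fun j _ => (hder j).const_mul (B j / (j:ℝ)^2))
  have hlin2 : HasDerivAt (fun x : ℝ => a₁ + a₀ * x) a₀ b := by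
    simpa using ((hasDerivAt_id b).const_mul a₀).const_add a₁
  have hvt : HasDerivAt vt
      (a₀ - (b/Real.pi)^2 * ∑ j ∈ Finset.Ico 1 M,
        (B j / (j:ℝ)^2) * (Real.cos ((j:ℝ)*Real.pi) * ((j:ℝ)*Real.pi/b))) b :=
    hlin2.sub (hsum.const_mul ((b/Real.pi)^2))
  rw [hvt.deriv]
  -- rewrite the sum using Slem
  have hBsum : ∀ j ∈ Finset.Ico 1 M,
      (B j / (j:ℝ)^2) * (Real.cos ((j:ℝ)*Real.pi) * ((j:ℝ)*Real.pi/b))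
        = ∑ k ∈ Finset.Ico 1 M,
            ((-1:ℝ)^j * ((j:ℝ) * Real.sin ((j:ℝ)*((k:ℝ)*Real.pi/M)))) * ((Real.pi/b) * c k) := by
    intro j hj
    rw [Finset.mem_Ico] at hj
    have hj2 : ((j:ℝ))^2 ≠ 0 := pow_ne_zero _ (Nat.cast_ne_zero.2 (by omega))
    have hcos : Real.cos ((j:ℝ)*Real.pi) = (-1:ℝ)^j := by
      simpa using Real.cos_nat_mul_pi_sub 0 j
    have hBj : B j = (j:ℝ)^2 * ∑ k ∈ Finset.Ico 1 M,
        Real.sin (Real.pi * (j:ℝ) * (k:ℝ) / M) * c k := rfl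
    rw [hBj, mul_div_cancel_left₀ _ hj2, hcos, Finset.sum_mul]
    apply Finset.sum_congr rfl
    intro k _
    have harg : Real.pi * (j:ℝ) * (k:ℝ) / M = (j:ℝ)*((k:ℝ)*Real.pi/M) := by ring
    rw [harg]; ring
  rw [Finset.sum_congr rfl hBsum, Finset.sum_comm]
  have hinner : ∀ k ∈ Finset.Ico 1 M,
      (∑ j ∈ Finset.Ico 1 M,
        ((-1:ℝ)^j * ((j:ℝ) * Real.sin ((j:ℝ)*((k:ℝ)*Real.pi/M)))) * ((Real.pi/b) * c k))
      = ((-1:ℝ)^k * ((M:ℝ)/2) * Real.tan ((k:ℝ)*Real.pi/(2*(M:ℝ)))) * ((Real.pi/b) * c k) := by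
    intro k hk
    rw [Finset.mem_Ico] at hk
    rw [← Finset.sum_mul, Slem M k hMeven hk.1 hk.2]
  rw [Finset.sum_congr rfl hinner]
  have hpt : ∀ k ∈ Finset.Ico 1 M,
      (b/Real.pi)^2 * (((-1:ℝ)^k * ((M:ℝ)/2) * Real.tan ((k:ℝ)*Real.pi/(2*(M:ℝ)))) * ((Real.pi/b) * c k))
      = (Real.pi/b) *
        ( (-a₁) * ((-1:ℝ)^(k+1) * Real.tan ((k:ℝ)*Real.pi/(2*(M:ℝ))))
          + (-(a₀*b/(M:ℝ))) * ((-1:ℝ)^(k+1) * (k:ℝ) * Real.tan ((k:ℝ)*Real.pi/(2*(M:ℝ))))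
          + (-1:ℝ)^(k+1) * v k * Real.tan ((k:ℝ)*Real.pi/(2*(M:ℝ))) ) := by
    intro k _
    rw [hc]
    field_simp
    ring
  rw [Finset.mul_sum, Finset.sum_congr rfl hpt, ← Finset.mul_sum]
  rw [Finset.sum_add_distrib, Finset.sum_add_distrib, ← Finset.mul_sum, ← Finset.mul_sum]
  rw [← Ilem M hM hMeven]
  have ha₁ : a₁ = v 0 := rfl
  have ha₀ : a₀ = (v M - v 0)/b := rfl
  rw [ha₁, ha₀]
  field_simp
  ring
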